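/- If C ⊆ {0,1}^n is extremal and S ⊆ {1,...,n}, then the restriction C|S (equivalently, the projection of C onto the coordinates in S) is an extremal concept class over domain S. -/

import Mathlib

variable {n : ℕ}

/-- `S` is shattered by the concept class `C`. -/
def Shatters (C : Set (Fin n → Bool)) (S : Finset (Fin n)) : Prop :=
  ∀ f : Fin n → Bool, ∃ c ∈ C, ∀ x ∈ S, c x = f x

/-- `B` is a cube of `C` with dimension set `S`. -/
def IsCube (C B : Set (Fin n → Bool)) (S : Finset (Fin n)) : Prop :=
  B ⊆ C ∧ (∀ b ∈ B, ∀ b' ∈ B, ∀ x, x ∉ S → b x = b' x) ∧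
    (∀ f : Fin n → Bool, ∃ b ∈ B, ∀ x ∈ S, b x = f x)

/-- `S` is strongly shattered by `C`. -/
def StronglyShatters (C : Set (Fin n → Bool)) (S : Finset (Fin n)) : Prop :=
  ∃ B, IsCube C B S

/-- `C` is extremal: every shattered set is strongly shattered. -/
def Extremal (C : Set (Fin n → Bool)) : Prop :=
  ∀ S, Shatters C S → StronglyShatters C S

/-- The restriction of a concept to `S` (coordinates outside `S` set to `false`). -/
def restrictF (c : Fin n → Bool) (S : Finset (Fin n)) : Fin n → Bool :=
  fun x => if x ∈ S then c x else false

/-- The restriction `C|S` of a concept class to the coordinate set `S`. -/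
def restrictC (C : Set (Fin n → Bool)) (S : Finset (Fin n)) : Set (Fin n → Bool) :=
  (restrictF · S) '' C

/-- Restrictions of extremal classes are extremal. -/
theorem restrict_extremal (n : ℕ) (C : Set (Fin n → Bool)) (S : Finset (Fin n))
    (hC : Extremal C) : Extremal (restrictC C S) := by
  intro T hT
  -- T ⊆ S
  have hTS : ∀ x ∈ T, x ∈ S := by
    intro x hx
    by_contra hxS
    obtain ⟨c', hc', hagr⟩ := hT (fun _ => true)
    obtain ⟨c, _, rfl⟩ := hc'
    have := hagr x hx
    simp [restrictF, hxS] at this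
  -- T shattered by C
  have hShat : Shatters C T := by
    intro f
    obtain ⟨c', hc', hagr⟩ := hT f
    obtain ⟨c, hc, rfl⟩ := hc'
    exact ⟨c, hc, fun x hx => by
      have := hagr x hx; simpa [restrictF, hTS x hx] using this⟩
  obtain ⟨B, hBsub, hBout, hBfull⟩ := hC T hShat
  refine ⟨(restrictF · S) '' B, ?_, ?_, ?_⟩
  · exact Set.image_mono hBsub
  · rintro _ ⟨b, hb, rfl⟩ _ ⟨b', hb', rfl⟩ x hx
    simp only [restrictF]
    split
    · exact hBout b hb b' hb' x hx
    · rfl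
  · intro f
    obtain ⟨b, hb, hagr⟩ := hBfull f
    exact ⟨restrictF b S, Set.mem_image_of_mem _ hb, fun x hx => by
      simpa [restrictF, hTS x hx] using hagr x hx⟩
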